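/- Let E be a finite set and for each e ∈ E let w_e > 0 and l_e > 0 be real constants, θ_e(y) = (l_e − y)/w_e and σ_e(s) = s + l_e/w_e. For each e ∈ E let μ₀^e be a finite Borel measure on ℝ supported in [0, l_e], let μ_b^e and μ_a^e be finite Borel measures on ℝ supported in [0,∞), and for each ordered pair (e′, e) ∈ E × E let μ_{e′→e} be a finite Borel measure on ℝ supported in [0,∞); set μ_in^e := ∑_{e′ ∈ E} μ_{e′→e}. Assume the conservation condition θ_e#μ₀^e + σ_e#(μ_in^e + μ_b^e) = μ_a^e + ∑_{e″ ∈ E} μ_{e→e″} for every e ∈ E, and define ν^e := T₀^{w_e, l_e}(μ₀^e) + T_b^{w_e, l_e}(μ_in^e) + T_b^{w_e, l_e}(μ_b^e). Let (φ^e)_{e ∈ E} be a family of continuously differentiable compactly supported functions φ^e : ℝ² → ℝ such that for all e′, e ∈ E and μ_{e′→e}-almost every t, φ^{e′}(l_{e′}, t) = φ^e(0, t). Then ∑_{e ∈ E} [ ∫_{ℝ²}(∂_tφ^e + w_e·∂_xφ^e) dν^e + ∫_ℝ φ^e(y,0) dμ₀^e(y) + ∫_ℝ φ^e(0,s) dμ_b^e(s)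 − ∫_ℝ φ^e(l_e, s) dμ_a^e(s) ] = 0; that is, the family (ν^e)_{e ∈ E} is a measure-valued solution of the tram network problem in the sense of Definition 3.5. -/

import Mathlib

open MeasureTheory

/-- The interior transport measure from an initial datum `μ₀` supported in `[0,l]`:
the pushforward under `(y,t) ↦ (y + t·w, t)` of the restriction of `μ₀ ⊗ Leb`
to `{(y,t) : 0 ≤ t ≤ (l − y)/w}`. -/
noncomputable def T0 (w l : ℝ) (μ₀ : MeasureTheory.Measure ℝ) :
    MeasureTheory.Measure (ℝ × ℝ) :=
  Measure.map (fun p : ℝ × ℝ => (p.1 + p.2 * w, p.2))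
    ((μ₀.prod volume).restrict {p : ℝ × ℝ | 0 ≤ p.2 ∧ p.2 ≤ (l - p.1) / w})

/-- The interior transport measure from a boundary datum `μ` supported in `[0,∞)`:
the pushforward under `(s,t) ↦ ((t − s)·w, t)` of the restriction of `μ ⊗ Leb`
to `{(s,t) : s ≤ t ≤ s + l/w}`. -/
noncomputable def Tb (w l : ℝ) (μ : MeasureTheory.Measure ℝ) :
    MeasureTheory.Measure (ℝ × ℝ) :=
  Measure.map (fun p : ℝ × ℝ => ((p.2 - p.1) * w, p.2))
    ((μ.prod volume).restrict {p : ℝ × ℝ | p.1 ≤ p.2 ∧ p.2 ≤ p.1 + l / w})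


section Aux
open Set

lemma bdd_of_hcs {f : ℝ × ℝ → ℝ} (hf : Continuous f) (hc : HasCompactSupport f) :
    ∃ C, ∀ x, |f x| ≤ C := by
  obtain ⟨x0, hx0⟩ := hf.abs.exists_forall_ge_of_hasCompactSupport hc.abs
  exact ⟨|f x0|, hx0⟩

lemma integrable_bdd {X : Type*} [MeasurableSpace X] [TopologicalSpace X]
    [OpensMeasurableSpace X] (μ : Measure X) [IsFiniteMeasure μ] {f : X → ℝ}
    (hf : AEStronglyMeasurable f μ) (C : ℝ) (hC : ∀ x, |f x| ≤ C) : Integrable f μ :=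
  (integrable_const C).mono' hf (ae_of_all _ fun x => by simpa using hC x)

lemma fin_aux (μ : Measure ℝ) [IsFiniteMeasure μ] (c d : ℝ → ℝ)
    (hc : Measurable c) (hd : Measurable d) (M : ℝ) (hM : ∀ᵐ y ∂μ, d y - c y ≤ M) :
    IsFiniteMeasure ((μ.prod volume).restrict {p : ℝ × ℝ | c p.1 ≤ p.2 ∧ p.2 ≤ d p.1}) := by
  have hS : MeasurableSet {p : ℝ × ℝ | c p.1 ≤ p.2 ∧ p.2 ≤ d p.1} :=
    (measurableSet_le (hc.comp measurable_fst) measurable_snd).inter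
      (measurableSet_le measurable_snd (hd.comp measurable_fst))
  constructor
  rw [Measure.restrict_apply_univ, Measure.prod_apply hS]
  have h1 : ∀ x : ℝ, (Prod.mk x ⁻¹' {p : ℝ × ℝ | c p.1 ≤ p.2 ∧ p.2 ≤ d p.1})
      = Icc (c x) (d x) := fun x => rfl
  calc ∫⁻ x, volume (Prod.mk x ⁻¹' {p : ℝ × ℝ | c p.1 ≤ p.2 ∧ p.2 ≤ d p.1}) ∂μ
      ≤ ∫⁻ _, ENNReal.ofReal M ∂μ := by
        refine lintegral_mono_ae (hM.mono fun x hx => ?_)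
        rw [h1 x, Real.volume_Icc]
        exact ENNReal.ofReal_le_ofReal hx
    _ = ENNReal.ofReal M * μ univ := by rw [lintegral_const]
    _ < ⊤ := ENNReal.mul_lt_top ENNReal.ofReal_lt_top (measure_lt_top μ univ)

lemma key_aux (wc : ℝ) (φ : ℝ × ℝ → ℝ) (hφ : ContDiff ℝ 1 φ) (hφc : HasCompactSupport φ)
    (μ : Measure ℝ) [IsFiniteMeasure μ]
    (a c d : ℝ → ℝ) (ha : Measurable a) (hc : Measurable c) (hd : Measurable d)
    (M : ℝ) (hM : ∀ᵐ y ∂μ, d y - c y ≤ M) (hcd : ∀ᵐ y ∂μ, c y ≤ d y) :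
    ∫ p, (fderiv ℝ φ p (0, 1) + wc * fderiv ℝ φ p (1, 0))
      ∂(Measure.map (fun p : ℝ × ℝ => (a p.1 + p.2 * wc, p.2))
        ((μ.prod volume).restrict {p : ℝ × ℝ | c p.1 ≤ p.2 ∧ p.2 ≤ d p.1}))
    = ∫ y, (φ (a y + d y * wc, d y) - φ (a y + c y * wc, c y)) ∂μ := by
  set S := {p : ℝ × ℝ | c p.1 ≤ p.2 ∧ p.2 ≤ d p.1} with hSdef
  have hS : MeasurableSet S :=
    (measurableSet_le (hc.comp measurable_fst) measurable_snd).inter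
      (measurableSet_le measurable_snd (hd.comp measurable_fst))
  haveI : IsFiniteMeasure ((μ.prod volume).restrict S) := fin_aux μ c d hc hd M hM
  set g : ℝ × ℝ → ℝ := fun p => fderiv ℝ φ p (0, 1) + wc * fderiv ℝ φ p (1, 0) with hgdef
  have hfd : Continuous (fderiv ℝ φ) := (hφ.continuous_fderiv one_ne_zero)
  have hgcont : Continuous g :=
    (hfd.clm_apply continuous_const).add (continuous_const.mul (hfd.clm_apply continuous_const))
  have hgcs : HasCompactSupport g := by
    have h1 : HasCompactSupport (fderiv ℝ φ) := hφc.fderiv (𝕜 := ℝ)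
    have h2 : HasCompactSupport (fun p => fderiv ℝ φ p (0, 1)) :=
      h1.comp_left (g := fun L : ℝ × ℝ →L[ℝ] ℝ => L (0, 1)) rfl
    have h3 : HasCompactSupport (fun p => fderiv ℝ φ p (1, 0)) :=
      h1.comp_left (g := fun L : ℝ × ℝ →L[ℝ] ℝ => L (1, 0)) rfl
    exact h2.add (h3.mul_left)
  obtain ⟨C, hC⟩ := bdd_of_hcs hgcont hgcs
  set F : ℝ × ℝ → ℝ × ℝ := fun p => (a p.1 + p.2 * wc, p.2) with hFdef
  have hF : Measurable F :=
    ((ha.comp measurable_fst).add (measurable_snd.mul_const wc)).prodMk measurable_snd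
  rw [integral_map hF.aemeasurable hgcont.aestronglyMeasurable]
  have hInt : Integrable (fun p => g (F p)) ((μ.prod volume).restrict S) :=
    integrable_bdd _ ((hgcont.measurable.comp hF).aestronglyMeasurable) C (fun p => hC (F p))
  rw [← integral_indicator hS]
  rw [integral_prod _ ((integrable_indicator_iff hS).2 hInt)]
  refine integral_congr_ae (hcd.mono fun y hy => ?_)
  have hind : ∀ t : ℝ, S.indicator (fun p => g (F p)) (y, t)
      = (Icc (c y) (d y)).indicator (fun t => g (F (y, t))) t := by
    intro t
    by_cases h : t ∈ Icc (c y) (d y)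
    · rw [indicator_of_mem h, indicator_of_mem (by exact ⟨h.1, h.2⟩)]
    · rw [indicator_of_notMem h, indicator_of_notMem (by
        intro hmem; exact h ⟨hmem.1, hmem.2⟩)]
  simp only [hind]
  rw [integral_indicator measurableSet_Icc, MeasureTheory.integral_Icc_eq_integral_Ioc,
    ← intervalIntegral.integral_of_le hy]
  have hderiv : ∀ t : ℝ, HasDerivAt (fun t => φ (a y + t * wc, t)) (g (F (y, t))) t := by
    intro t
    have h1 : HasDerivAt (fun t : ℝ => (a y + t * wc, t)) ((wc : ℝ), (1 : ℝ)) t := by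
      simpa using (((hasDerivAt_id t).mul_const wc).const_add (a y)).prodMk (hasDerivAt_id t)
    have h2 := ((hφ.differentiable one_ne_zero) (a y + t * wc, t)).hasFDerivAt.comp_hasDerivAt_of_eq t h1 rfl
    have h3 : fderiv ℝ φ (a y + t * wc, t) (wc, 1) = g (F (y, t)) := by
      have hv : ((wc : ℝ), (1 : ℝ)) = wc • ((1 : ℝ), (0 : ℝ)) + ((0 : ℝ), (1 : ℝ)) := by
        simp [Prod.ext_iff]
      rw [hv, ContinuousLinearMap.map_add, ContinuousLinearMap.map_smul, smul_eq_mul]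
      simp only [hgdef, hFdef]
      ring
    rw [h3] at h2
    exact h2
  rw [intervalIntegral.integral_eq_sub_of_hasDerivAt (fun t _ => hderiv t)
    ((hgcont.comp (show Continuous fun t : ℝ => F (y, t) by simp only [hFdef]; fun_prop)).intervalIntegrable _ _)]


lemma T0_key (w l : ℝ) (hw : 0 < w) (hl : 0 < l) (μ : Measure ℝ) [IsFiniteMeasure μ]
    (hμ : μ ((Icc (0 : ℝ) l)ᶜ) = 0)
    (φ : ℝ × ℝ → ℝ) (hφ : ContDiff ℝ 1 φ) (hφc : HasCompactSupport φ) :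
    ∫ p, (fderiv ℝ φ p (0, 1) + w * fderiv ℝ φ p (1, 0)) ∂(T0 w l μ)
      = ∫ y, (φ (l, (l - y) / w) - φ (y, 0)) ∂μ := by
  have hae : ∀ᵐ y ∂μ, y ∈ Icc (0 : ℝ) l := by
    rw [ae_iff]
    exact hμ
  have h := key_aux w φ hφ hφc μ (fun y => y) (fun _ => 0) (fun y => (l - y) / w)
    measurable_id (measurable_const) ((measurable_const.sub measurable_id).div_const w)
    (l / w)
    (hae.mono fun y hy => by
      simp only [sub_zero]
      gcongr
      · linarith [hy.1])
    (hae.mono fun y hy => div_nonneg (by linarith [hy.2]) hw.le)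
  rw [T0]
  refine h.trans (integral_congr_ae (ae_of_all _ fun y => ?_))
  have h1 : y + (l - y) / w * w = l := by field_simp; ring
  have h2 : y + (0 : ℝ) * w = y := by ring
  simp only [h1, h2]

lemma Tb_key (w l : ℝ) (hw : 0 < w) (hl : 0 < l) (μ : Measure ℝ) [IsFiniteMeasure μ]
    (φ : ℝ × ℝ → ℝ) (hφ : ContDiff ℝ 1 φ) (hφc : HasCompactSupport φ) :
    ∫ p, (fderiv ℝ φ p (0, 1) + w * fderiv ℝ φ p (1, 0)) ∂(Tb w l μ)
      = ∫ s, (φ (l, s + l / w) - φ (0, s)) ∂μ := by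
  have hmap : (fun p : ℝ × ℝ => ((p.2 - p.1) * w, p.2))
      = fun p : ℝ × ℝ => (-(p.1 * w) + p.2 * w, p.2) := by
    funext p
    simp only [Prod.mk.injEq]
    exact ⟨by ring, trivial⟩
  rw [Tb, hmap]
  have h := key_aux w φ hφ hφc μ (fun s => -(s * w)) (fun s => s) (fun s => s + l / w)
    (measurable_id.mul_const w).neg measurable_id (measurable_id.add_const (l / w))
    (l / w) (ae_of_all _ fun s => le_of_eq (by ring))
    (ae_of_all _ fun s => by linarith [div_nonneg hl.le hw.le])
  refine h.trans (integral_congr_ae (ae_of_all _ fun s => ?_))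
  have h1 : -(s * w) + (s + l / w) * w = l := by field_simp; ring
  have h2 : -(s * w) + s * w = 0 := by ring
  simp only [h1, h2]

lemma T0_fin (w l : ℝ) (hw : 0 < w) (μ : Measure ℝ) [IsFiniteMeasure μ]
    (hμ : μ ((Icc (0 : ℝ) l)ᶜ) = 0) : IsFiniteMeasure (T0 w l μ) := by
  have hae : ∀ᵐ y ∂μ, y ∈ Icc (0 : ℝ) l := by rw [ae_iff]; exact hμ
  haveI := fin_aux μ (fun _ => 0) (fun y => (l - y) / w) measurable_const
    ((measurable_const.sub measurable_id).div_const w) (l / w)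
    (hae.mono fun y hy => by
      simp only [sub_zero]
      gcongr
      · linarith [hy.1])
  exact Measure.isFiniteMeasure_map _ _

lemma Tb_fin (w l : ℝ) (μ : Measure ℝ) [IsFiniteMeasure μ] :
    IsFiniteMeasure (Tb w l μ) := by
  haveI := fin_aux μ (fun s => s) (fun s => s + l / w) measurable_id
    (measurable_id.add_const (l / w)) (l / w) (ae_of_all _ fun s => le_of_eq (by ring))
  exact Measure.isFiniteMeasure_map _ _

end Aux

/-- Existence part of Theorem 3.3 (network version): with the coupling
conditions encoded by transfer measures `μT_{e′→e}` satisfying the conservation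
condition `θ_e#μ₀^e + σ_e#(μ_in^e + μ_b^e) = μ_a^e + ∑_{e″} μT_{e→e″}`, the
family `ν^e = T₀(μ₀^e) + T_b(μ_in^e) + T_b(μ_b^e)` is a measure-valued
solution of the tram network problem (Definition 3.5). -/
theorem network_weak_solution (E : Type*) [Fintype E]
    (w l : E → ℝ) (hw : ∀ e, 0 < w e) (hl : ∀ e, 0 < l e)
    (μ₀ μb μa : E → Measure ℝ)
    [∀ e, IsFiniteMeasure (μ₀ e)] [∀ e, IsFiniteMeasure (μb e)]
    [∀ e, IsFiniteMeasure (μa e)]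
    (hμ₀ : ∀ e, (μ₀ e) ((Set.Icc (0 : ℝ) (l e))ᶜ) = 0)
    (hμb : ∀ e, (μb e) ((Set.Ici (0 : ℝ))ᶜ) = 0)
    (hμa : ∀ e, (μa e) ((Set.Ici (0 : ℝ))ᶜ) = 0)
    (μT : E → E → Measure ℝ) [∀ e' e, IsFiniteMeasure (μT e' e)]
    (hμT : ∀ e' e, (μT e' e) ((Set.Ici (0 : ℝ))ᶜ) = 0)
    (hcons : ∀ e, Measure.map (fun y => (l e - y) / w e) (μ₀ e)
        + Measure.map (fun s => s + l e / w e) ((∑ e' : E, μT e' e) + μb e)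
        = μa e + ∑ e'' : E, μT e e'')
    (φ : E → ℝ × ℝ → ℝ)
    (hφ : ∀ e, ContDiff ℝ 1 (φ e)) (hφc : ∀ e, HasCompactSupport (φ e))
    (hvert : ∀ e' e, ∀ᵐ t ∂(μT e' e), φ e' (l e', t) = φ e (0, t)) :
    ∑ e : E,
      (∫ p, (fderiv ℝ (φ e) p (0, 1) + w e * fderiv ℝ (φ e) p (1, 0))
          ∂(T0 (w e) (l e) (μ₀ e) + Tb (w e) (l e) (∑ e' : E, μT e' e)
            + Tb (w e) (l e) (μb e))
        + ∫ y, φ e (y, 0) ∂(μ₀ e)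
        + ∫ s, φ e (0, s) ∂(μb e)
        - ∫ s, φ e (l e, s) ∂(μa e)) = 0 := by
  classical
  haveI hin : ∀ e, IsFiniteMeasure (∑ e' : E, μT e' e) := by
    intro e
    constructor
    rw [Measure.finset_sum_apply]
    exact ENNReal.sum_lt_top.2 fun e' _ => measure_lt_top _ _
  have key : ∀ e : E,
      (∫ p, (fderiv ℝ (φ e) p (0, 1) + w e * fderiv ℝ (φ e) p (1, 0))
          ∂(T0 (w e) (l e) (μ₀ e) + Tb (w e) (l e) (∑ e' : E, μT e' e)
            + Tb (w e) (l e) (μb e))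
        + ∫ y, φ e (y, 0) ∂(μ₀ e)
        + ∫ s, φ e (0, s) ∂(μb e)
        - ∫ s, φ e (l e, s) ∂(μa e))
      = (∑ e'' : E, ∫ t, φ e (l e, t) ∂(μT e e''))
        - ∑ e' : E, ∫ t, φ e (0, t) ∂(μT e' e) := by
    intro e
    haveI := T0_fin (w e) (l e) (hw e) (μ₀ e) (hμ₀ e)
    haveI := Tb_fin (w e) (l e) (∑ e' : E, μT e' e)
    haveI := Tb_fin (w e) (l e) (μb e)
    have hφcont : Continuous (φ e) := (hφ e).continuous
    obtain ⟨Cφ, hCφ⟩ := bdd_of_hcs hφcont (hφc e)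
    -- the integrand g is continuous and bounded
    have hfd : Continuous (fderiv ℝ (φ e)) := ((hφ e).continuous_fderiv one_ne_zero)
    have hgcont : Continuous (fun p : ℝ × ℝ =>
        fderiv ℝ (φ e) p (0, 1) + w e * fderiv ℝ (φ e) p (1, 0)) :=
      (hfd.clm_apply continuous_const).add (continuous_const.mul (hfd.clm_apply continuous_const))
    have hgcs : HasCompactSupport (fun p : ℝ × ℝ =>
        fderiv ℝ (φ e) p (0, 1) + w e * fderiv ℝ (φ e) p (1, 0)) := by
      have h1 : HasCompactSupport (fderiv ℝ (φ e)) := (hφc e).fderiv (𝕜 := ℝ)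
      exact (h1.comp_left (g := fun L : ℝ × ℝ →L[ℝ] ℝ => L (0, 1)) rfl).add
        ((h1.comp_left (g := fun L : ℝ × ℝ →L[ℝ] ℝ => L (1, 0)) rfl).mul_left)
    obtain ⟨Cg, hCg⟩ := bdd_of_hcs hgcont hgcs
    have hI1 : Integrable (fun p : ℝ × ℝ =>
        fderiv ℝ (φ e) p (0, 1) + w e * fderiv ℝ (φ e) p (1, 0))
        (T0 (w e) (l e) (μ₀ e)) :=
      integrable_bdd _ hgcont.aestronglyMeasurable Cg hCg
    have hI2 : Integrable (fun p : ℝ × ℝ =>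
        fderiv ℝ (φ e) p (0, 1) + w e * fderiv ℝ (φ e) p (1, 0))
        (Tb (w e) (l e) (∑ e' : E, μT e' e)) :=
      integrable_bdd _ hgcont.aestronglyMeasurable Cg hCg
    have hI3 : Integrable (fun p : ℝ × ℝ =>
        fderiv ℝ (φ e) p (0, 1) + w e * fderiv ℝ (φ e) p (1, 0))
        (Tb (w e) (l e) (μb e)) :=
      integrable_bdd _ hgcont.aestronglyMeasurable Cg hCg
    rw [integral_add_measure (hI1.add_measure hI2) hI3, integral_add_measure hI1 hI2,
      T0_key (w e) (l e) (hw e) (hl e) (μ₀ e) (hμ₀ e) (φ e) (hφ e) (hφc e),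
      Tb_key (w e) (l e) (hw e) (hl e) (∑ e' : E, μT e' e) (φ e) (hφ e) (hφc e),
      Tb_key (w e) (l e) (hw e) (hl e) (μb e) (φ e) (hφ e) (hφc e)]
    -- integrability of all the boundary-type integrands
    have hbd : ∀ (μ : Measure ℝ) [IsFiniteMeasure μ] (f : ℝ → ℝ × ℝ), Continuous f →
        Integrable (fun x => φ e (f x)) μ := by
      intro μ _ f hf
      exact integrable_bdd _ (hφcont.comp hf).aestronglyMeasurable Cφ (fun x => hCφ (f x))
    rw [integral_sub (hbd _ _ (by fun_prop)) (hbd _ _ (by fun_prop)),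
      integral_sub (hbd _ _ (by fun_prop)) (hbd _ _ (by fun_prop)),
      integral_sub (hbd _ _ (by fun_prop)) (hbd _ _ (by fun_prop))]
    -- identify the boundary terms through the conservation law
    have hθ : Measurable (fun y => (l e - y) / w e) :=
      (measurable_const.sub measurable_id).div_const (w e)
    have hσ : Measurable (fun s : ℝ => s + l e / w e) := measurable_id.add_const _
    have hcontl : Continuous (fun t : ℝ => φ e (l e, t)) := by fun_prop
    have e1 : ∫ y, φ e (l e, (l e - y) / w e) ∂(μ₀ e)
        = ∫ t, φ e (l e, t) ∂(Measure.map (fun y => (l e - y) / w e) (μ₀ e)) :=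
      (integral_map hθ.aemeasurable hcontl.aestronglyMeasurable).symm
    have e2 : ∫ t, φ e (l e, t)
          ∂(Measure.map (fun s => s + l e / w e) ((∑ e' : E, μT e' e) + μb e))
        = (∫ s, φ e (l e, s + l e / w e) ∂(∑ e' : E, μT e' e))
          + ∫ s, φ e (l e, s + l e / w e) ∂(μb e) := by
      rw [integral_map hσ.aemeasurable hcontl.aestronglyMeasurable,
        integral_add_measure (hbd _ _ (by fun_prop)) (hbd _ _ (by fun_prop))]
    have e3 : (∫ t, φ e (l e, t) ∂(Measure.map (fun y => (l e - y) / w e) (μ₀ e)))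
        + ∫ t, φ e (l e, t)
            ∂(Measure.map (fun s => s + l e / w e) ((∑ e' : E, μT e' e) + μb e))
        = (∫ s, φ e (l e, s) ∂(μa e)) + ∑ e'' : E, ∫ t, φ e (l e, t) ∂(μT e e'') := by
      rw [← integral_add_measure (integrable_bdd _ (hcontl.aestronglyMeasurable) Cφ
          (fun x => hCφ _)) (integrable_bdd _ (hcontl.aestronglyMeasurable) Cφ
          (fun x => hCφ _)), hcons e,
        integral_add_measure (hbd _ _ (by fun_prop)) (integrable_bdd _
          (hcontl.aestronglyMeasurable) Cφ (fun x => hCφ _)),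
        integral_finset_sum_measure (fun e'' _ => hbd _ _ (by fun_prop))]
    have e4 : ∫ s, φ e (0, s) ∂(∑ e' : E, μT e' e)
        = ∑ e' : E, ∫ t, φ e (0, t) ∂(μT e' e) :=
      integral_finset_sum_measure (fun e' _ => hbd _ _ (by fun_prop))
    rw [e1] at *
    linarith [e2, e3, e4]
  rw [Finset.sum_congr rfl (fun e _ => key e), Finset.sum_sub_distrib]
  rw [sub_eq_zero]
  rw [Finset.sum_comm]
  refine Finset.sum_congr rfl fun e' _ => Finset.sum_congr rfl fun e _ => ?_
  exact integral_congr_ae (hvert e e')
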